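/- arXiv:1602.03246 — 5 statements merged into one kernel-verified Lean document; each statement's English description precedes it below -/
import Mathlib

section
/- Let m be a natural number and let f(q) = ∑_{i=0}^m N_i (1−q)^i q^{m−i} be a real polynomial function where the real coefficients N_0, …, N_m are either all non-negative or all non-positive. Then for every q ∈ [0,1], q(1−q)|f'(q)| ≤ m|f(q)|. -/
lemma term_id_aux (m i : ℕ) (hi : i ≤ m) (q : ℝ) :
    q * (1 - q) *
      ((↑i * (1 - q) ^ (i - 1) * (-1)) * q ^ (m - i) +
        (1 - q) ^ i * (↑(m - i) * q ^ (m - i - 1)))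
    = (1 - q) ^ i * q ^ (m - i) * (↑(m - i) * (1 - q) - ↑i * q) := by
  obtain ⟨k, rfl⟩ := Nat.exists_eq_add_of_le hi
  simp only [Nat.add_sub_cancel_left]
  cases i with
  | zero =>
    cases k with
    | zero => simp
    | succ k => push_cast; simp [pow_succ]; ring
  | succ i =>
    cases k with
    | zero => push_cast; simp [pow_succ]; ring
    | succ k =>
      push_cast
      simp only [Nat.succ_sub_one, pow_succ]
      ring

/-- If `f(q) = ∑_{i=0}^m N_i (1-q)^i q^(m-i)` where the real coefficients `N_0, …, N_m`
are either all non-negative or all non-positive, then for every `q ∈ [0,1]`,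
`q(1-q)|f'(q)| ≤ m|f(q)|`. -/
theorem deriv_bound_of_sign_coeffs (m : ℕ) (N : ℕ → ℝ)
    (hN : (∀ i ≤ m, 0 ≤ N i) ∨ (∀ i ≤ m, N i ≤ 0))
    (f : ℝ → ℝ)
    (hf : ∀ q : ℝ, f q = ∑ i ∈ Finset.range (m + 1), N i * (1 - q) ^ i * q ^ (m - i)) :
    ∀ q ∈ Set.Icc (0 : ℝ) 1, q * (1 - q) * |deriv f q| ≤ m * |f q| := by
  intro q hq
  obtain ⟨hq0, hq1⟩ := hq
  have hq1' : (0:ℝ) ≤ 1 - q := by linarith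
  have hF : f = fun q => ∑ i ∈ Finset.range (m + 1),
      N i * (1 - q) ^ i * q ^ (m - i) := funext hf
  -- derivative
  have hderiv : HasDerivAt f
      (∑ i ∈ Finset.range (m + 1), N i *
        ((↑i * (1 - q) ^ (i - 1) * (-1)) * q ^ (m - i) +
          (1 - q) ^ i * (↑(m - i) * q ^ (m - i - 1)))) q := by
    rw [hF]
    apply HasDerivAt.fun_sum
    intro i _
    have h1 : HasDerivAt (fun q : ℝ => (1 - q) ^ i)
        ((↑i : ℝ) * (1 - q) ^ (i - 1) * (-1)) q := by
      have : HasDerivAt (fun q : ℝ => 1 - q) (-1) q := by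
        simpa using (hasDerivAt_const q (1:ℝ)).fun_sub (hasDerivAt_id q)
      exact this.pow i
    have h2 : HasDerivAt (fun q : ℝ => q ^ (m - i))
        ((↑(m - i) : ℝ) * q ^ (m - i - 1)) q := hasDerivAt_pow _ _
    have h3 := (h1.fun_mul h2).const_mul (N i)
    have h4 : (fun q : ℝ => N i * (1 - q) ^ i * q ^ (m - i))
        = fun q : ℝ => N i * ((1 - q) ^ i * q ^ (m - i)) := by
      funext x; ring
    rw [h4]
    convert h3 using 1
  have hD := hderiv.deriv
  -- key identity
  have hkey : q * (1 - q) * deriv f q =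
      ∑ i ∈ Finset.range (m + 1),
        N i * (1 - q) ^ i * q ^ (m - i) * (↑(m - i) * (1 - q) - ↑i * q) := by
    rw [hD, Finset.mul_sum]
    apply Finset.sum_congr rfl
    intro i hi
    have hi' : i ≤ m := Nat.lt_succ_iff.mp (Finset.mem_range.mp hi)
    have := term_id_aux m i hi' q
    linear_combination N i * this
  -- bound on factor
  have hc : ∀ i ≤ m, |(↑(m - i) : ℝ) * (1 - q) - ↑i * q| ≤ (m : ℝ) := by
    intro i hi
    rw [abs_le]
    have h1 : ((m - i : ℕ) : ℝ) ≤ (m : ℝ) := by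
      exact_mod_cast Nat.sub_le m i
    have h2 : ((i : ℕ) : ℝ) ≤ (m : ℝ) := by exact_mod_cast hi
    have h3 : (0:ℝ) ≤ ((m - i : ℕ) : ℝ) := Nat.cast_nonneg _
    have h4 : (0:ℝ) ≤ ((i : ℕ) : ℝ) := Nat.cast_nonneg _
    constructor
    · nlinarith
    · nlinarith
  -- abs of sum of terms equals |f q|
  have hterm_nonneg : ∀ i, (0:ℝ) ≤ (1 - q) ^ i * q ^ (m - i) := fun i =>
    mul_nonneg (pow_nonneg hq1' i) (pow_nonneg hq0 _)
  have hb : ∑ i ∈ Finset.range (m + 1), |N i * (1 - q) ^ i * q ^ (m - i)| = |f q| := by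
    rw [hf q]
    rcases hN with h | h
    · have hpos : ∀ i ∈ Finset.range (m + 1),
          (0:ℝ) ≤ N i * (1 - q) ^ i * q ^ (m - i) := by
        intro i hi
        have hi' : i ≤ m := Nat.lt_succ_iff.mp (Finset.mem_range.mp hi)
        have := hterm_nonneg i
        nlinarith [h i hi']
      rw [abs_of_nonneg (Finset.sum_nonneg hpos)]
      exact Finset.sum_congr rfl fun i hi => abs_of_nonneg (hpos i hi)
    · have hneg : ∀ i ∈ Finset.range (m + 1),
          N i * (1 - q) ^ i * q ^ (m - i) ≤ 0 := by
        intro i hi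
        have hi' : i ≤ m := Nat.lt_succ_iff.mp (Finset.mem_range.mp hi)
        have := hterm_nonneg i
        nlinarith [h i hi']
      rw [abs_of_nonpos (Finset.sum_nonpos hneg), ← Finset.sum_neg_distrib]
      exact Finset.sum_congr rfl fun i hi => abs_of_nonpos (hneg i hi)
  -- finish
  have hqq : (0:ℝ) ≤ q * (1 - q) := mul_nonneg hq0 hq1'
  calc q * (1 - q) * |deriv f q| = |q * (1 - q) * deriv f q| := by
        rw [abs_mul, abs_of_nonneg hqq]
    _ = |∑ i ∈ Finset.range (m + 1),
          N i * (1 - q) ^ i * q ^ (m - i) * (↑(m - i) * (1 - q) - ↑i * q)| := by rw [hkey]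
    _ ≤ ∑ i ∈ Finset.range (m + 1),
          |N i * (1 - q) ^ i * q ^ (m - i) * (↑(m - i) * (1 - q) - ↑i * q)| :=
        Finset.abs_sum_le_sum_abs _ _
    _ ≤ ∑ i ∈ Finset.range (m + 1), |N i * (1 - q) ^ i * q ^ (m - i)| * (m : ℝ) := by
        apply Finset.sum_le_sum
        intro i hi
        have hi' : i ≤ m := Nat.lt_succ_iff.mp (Finset.mem_range.mp hi)
        rw [abs_mul]
        exact mul_le_mul_of_nonneg_left (hc i hi') (abs_nonneg _)
    _ = (m : ℝ) * |f q| := by rw [← Finset.sum_mul, hb, mul_comm]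
end

section
/- Let G be a finite simple graph with m edges and reliability polynomial R(G). Then for every q ∈ [0,1], q(1−q)|R(G)'(q)| ≤ m · (1 − R(G)(q)). -/
/-- `relCoeff G i` is the number of `i`-element subsets `S` of the edge set of `G` such that
the spanning subgraph `(V, S)` is connected. -/
noncomputable def relCoeff {V : Type*} [Fintype V] (G : SimpleGraph V) (i : ℕ) : ℕ :=
  {S : Finset (Sym2 V) | ↑S ⊆ G.edgeSet ∧ S.card = i ∧
    (SimpleGraph.fromEdgeSet (↑S : Set (Sym2 V))).Connected}.ncard

/-- The number of edges of `G`. -/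
noncomputable def numEdges {V : Type*} [Fintype V] (G : SimpleGraph V) : ℕ :=
  G.edgeSet.ncard

/-- The all-terminal reliability polynomial of `G`, as a real function of the
edge failure probability `q`. -/
noncomputable def rel {V : Type*} [Fintype V] (G : SimpleGraph V) (q : ℝ) : ℝ :=
  ∑ i ∈ Finset.range (numEdges G + 1),
    (relCoeff G i : ℝ) * (1 - q) ^ i * q ^ (numEdges G - i)

/-- The reliability polynomial of the complete graph on `n` vertices. -/
noncomputable def relK (n : ℕ) : ℝ → ℝ := rel (⊤ : SimpleGraph (Fin n))

open Finset

section Aux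
variable {V : Type*} [Fintype V]

noncomputable def edgeFin (G : SimpleGraph V) : Finset (Sym2 V) :=
  G.edgeSet.toFinite.toFinset

lemma coe_edgeFin (G : SimpleGraph V) : (↑(edgeFin G) : Set (Sym2 V)) = G.edgeSet :=
  Set.Finite.coe_toFinset _

noncomputable def relFinset (G : SimpleGraph V) (i : ℕ) : Finset (Finset (Sym2 V)) :=
  @Finset.filter _ (fun S => (SimpleGraph.fromEdgeSet (↑S : Set (Sym2 V))).Connected)
    (Classical.decPred _) ((edgeFin G).powersetCard i)

lemma mem_relFinset {G : SimpleGraph V} {i : ℕ} {S : Finset (Sym2 V)} :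
    S ∈ relFinset G i ↔ S ⊆ edgeFin G ∧ S.card = i ∧
      (SimpleGraph.fromEdgeSet (↑S : Set (Sym2 V))).Connected := by
  simp [relFinset, Finset.mem_powersetCard, and_assoc]

lemma relCoeff_eq_card (G : SimpleGraph V) (i : ℕ) :
    relCoeff G i = (relFinset G i).card := by
  rw [relCoeff, ← Set.ncard_coe_finset]
  congr 1
  ext S
  simp only [Set.mem_setOf_eq, Finset.mem_coe, mem_relFinset]
  rw [← coe_edgeFin G, Finset.coe_subset]

lemma numEdges_eq (G : SimpleGraph V) : numEdges G = (edgeFin G).card :=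
  Set.ncard_eq_toFinset_card _ _

lemma relCoeff_le (G : SimpleGraph V) (i : ℕ) :
    relCoeff G i ≤ (numEdges G).choose i := by
  rw [relCoeff_eq_card, numEdges_eq, ← Finset.card_powersetCard i (edgeFin G)]
  refine Finset.card_le_card (fun S hS => ?_)
  obtain ⟨h1, h2, -⟩ := mem_relFinset.mp hS
  exact Finset.mem_powersetCard.mpr ⟨h1, h2⟩

lemma margulis (G : SimpleGraph V) (i : ℕ) :
    (numEdges G - i) * relCoeff G i ≤ (i + 1) * relCoeff G (i + 1) := by
  classical
  rw [relCoeff_eq_card, relCoeff_eq_card]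
  have hQ : ((relFinset G i).sigma (fun T => edgeFin G \ T)).card
      = (numEdges G - i) * (relFinset G i).card := by
    rw [Finset.card_sigma]
    rw [Finset.sum_congr rfl (fun T hT => ?_), Finset.sum_const, smul_eq_mul, mul_comm]
    · obtain ⟨h1, h2, -⟩ := mem_relFinset.mp hT
      rw [Finset.card_sdiff_of_subset h1, h2, numEdges_eq]
  have hP : ((relFinset G (i+1)).sigma (fun S => (S : Finset (Sym2 V)))).card
      = (i + 1) * (relFinset G (i+1)).card := by
    rw [Finset.card_sigma]
    rw [Finset.sum_congr rfl (fun S hS => (mem_relFinset.mp hS).2.1), Finset.sum_const,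
      smul_eq_mul, mul_comm]
  rw [← hQ, ← hP]
  refine Finset.card_le_card_of_injOn (fun x => ⟨insert x.2 x.1, x.2⟩) ?_ ?_
  · rintro ⟨T, e⟩ hx
    rw [Finset.mem_coe, Finset.mem_sigma] at hx ⊢
    obtain ⟨hT, he⟩ := hx
    obtain ⟨h1, h2, h3⟩ := mem_relFinset.mp hT
    rw [Finset.mem_sdiff] at he
    refine ⟨mem_relFinset.mpr ⟨Finset.insert_subset he.1 h1, ?_, ?_⟩, Finset.mem_insert_self _ _⟩
    · rw [Finset.card_insert_of_notMem he.2, h2]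
    · refine h3.mono (SimpleGraph.fromEdgeSet_mono ?_)
      rw [Finset.coe_insert]
      exact Set.subset_insert _ _
  · rintro ⟨T, e⟩ hx ⟨T', e'⟩ hy h
    simp only [Finset.mem_coe, Finset.mem_sigma, Finset.mem_sdiff] at hx hy
    simp only [Sigma.mk.inj_iff, heq_eq_eq] at h
    obtain ⟨hins, he⟩ := h
    subst he
    have hT : T = T' := by
      rw [← Finset.erase_insert hx.2.2, hins, Finset.erase_insert hy.2.2]
    subst hT
    rfl

lemma rel_hasDerivAt (G : SimpleGraph V) (q : ℝ) :
    HasDerivAt (rel G)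
      (∑ i ∈ Finset.range (numEdges G + 1), (relCoeff G i : ℝ) *
        (((numEdges G - i : ℕ) : ℝ) * q ^ (numEdges G - i - 1) * (1 - q) ^ i
          - (i : ℝ) * (1 - q) ^ (i - 1) * q ^ (numEdges G - i))) q := by
  refine HasDerivAt.fun_sum (fun i hi => ?_)
  have h1 : HasDerivAt (fun x : ℝ => (1 - x) ^ i)
      ((i : ℝ) * (1 - q) ^ (i - 1) * (-1)) q :=
    (hasDerivAt_pow i (1 - q)).comp q ((hasDerivAt_id q).const_sub 1)
  have h2 : HasDerivAt (fun x : ℝ => x ^ (numEdges G - i))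
      (((numEdges G - i : ℕ) : ℝ) * q ^ (numEdges G - i - 1)) q :=
    hasDerivAt_pow _ q
  have := (((hasDerivAt_const q ((relCoeff G i : ℝ))).fun_mul h1).fun_mul h2)
  convert this using 1
  · rfl
  ring

lemma pow_pred_mul (x : ℝ) (k : ℕ) : (k : ℝ) * x ^ (k - 1) * x = (k : ℝ) * x ^ k := by
  cases k with
  | zero => simp
  | succ n => rw [Nat.add_sub_cancel, pow_succ]; ring


end Aux

/-- For a finite simple graph `G` with `m` edges, for every `q ∈ [0,1]`,
`q(1-q)|R(G)'(q)| ≤ m · (1 - R(G)(q))`. -/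
theorem rel_deriv_le_one_sub_rel {V : Type*} [Fintype V] (G : SimpleGraph V) :
    ∀ q ∈ Set.Icc (0 : ℝ) 1,
      q * (1 - q) * |deriv (rel G) q| ≤ (numEdges G : ℝ) * (1 - rel G q) := by
  intro q hq
  obtain ⟨hq0, hq1⟩ := hq
  have hp0 : (0 : ℝ) ≤ 1 - q := by linarith
  have hp1 : (1 : ℝ) - q ≤ 1 := by linarith
  set m := numEdges G with hm
  set N : ℕ → ℝ := fun i => (relCoeff G i : ℝ) with hN
  -- weights
  set w : ℕ → ℝ := fun i => (1 - q) ^ (i + 1) * q ^ (m - i) with hw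
  have hw0 : ∀ i, 0 ≤ w i := fun i => mul_nonneg (pow_nonneg hp0 _) (pow_nonneg hq0 _)
  -- the key sum identity
  have hkey : q * (1 - q) * deriv (rel G) q
      = ∑ i ∈ Finset.range m, (N i * ((m - i : ℕ) : ℝ) - N (i + 1) * ((i : ℝ) + 1)) * w i := by
    rw [(rel_hasDerivAt G q).deriv, Finset.mul_sum]
    have step : ∀ i ∈ Finset.range (m + 1),
        q * (1 - q) * ((relCoeff G i : ℝ) *
          (((m - i : ℕ) : ℝ) * q ^ (m - i - 1) * (1 - q) ^ i
            - (i : ℝ) * (1 - q) ^ (i - 1) * q ^ (m - i)))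
        = N i * (((m - i : ℕ) : ℝ) * ((1 - q) ^ (i + 1) * q ^ (m - i)))
          - N i * ((i : ℝ) * ((1 - q) ^ i * (q ^ (m - i) * q))) := by
      intro i hi
      have e1 : ((m - i : ℕ) : ℝ) * q ^ (m - i - 1) * q = ((m - i : ℕ) : ℝ) * q ^ (m - i) :=
        pow_pred_mul q (m - i)
      have e2 : (i : ℝ) * (1 - q) ^ (i - 1) * (1 - q) = (i : ℝ) * (1 - q) ^ i :=
        pow_pred_mul (1 - q) i
      calc q * (1 - q) * ((relCoeff G i : ℝ) *
          (((m - i : ℕ) : ℝ) * q ^ (m - i - 1) * (1 - q) ^ i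
            - (i : ℝ) * (1 - q) ^ (i - 1) * q ^ (m - i)))
          = N i * ((((m - i : ℕ) : ℝ) * q ^ (m - i - 1) * q) * ((1 - q) ^ i * (1 - q)))
            - N i * ((((i : ℝ)) * (1 - q) ^ (i - 1) * (1 - q)) * (q ^ (m - i) * q)) := by ring
        _ = _ := by rw [e1, e2]; ring
    rw [Finset.sum_congr rfl step, Finset.sum_sub_distrib]
    -- first sum: last term vanishes
    have hA : ∑ i ∈ Finset.range (m + 1),
        N i * (((m - i : ℕ) : ℝ) * ((1 - q) ^ (i + 1) * q ^ (m - i)))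
        = ∑ i ∈ Finset.range m, N i * (((m - i : ℕ) : ℝ) * w i) := by
      rw [Finset.sum_range_succ]
      simp [hw]
    -- second sum: first term vanishes, shift index
    have hB : ∑ i ∈ Finset.range (m + 1),
        N i * ((i : ℝ) * ((1 - q) ^ i * (q ^ (m - i) * q)))
        = ∑ i ∈ Finset.range m, N (i + 1) * (((i : ℝ) + 1) * w i) := by
      rw [Finset.sum_range_succ']
      simp only [Nat.cast_zero, zero_mul, mul_zero, add_zero]
      refine Finset.sum_congr rfl (fun i hi => ?_)
      rw [Finset.mem_range] at hi
      have : m - (i + 1) + 1 = m - i := by omega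
      rw [hw]
      push_cast
      rw [← pow_succ q (m - (i+1)), this]
      try ring
    rw [hA, hB, ← Finset.sum_sub_distrib]
    refine Finset.sum_congr rfl (fun i hi => by ring)
  -- bound each bracket
  have hbr_le : ∀ i ∈ Finset.range m,
      N i * ((m - i : ℕ) : ℝ) - N (i + 1) * ((i : ℝ) + 1) ≤ 0 := by
    intro i hi
    have h : ((m - i : ℕ) : ℝ) * N i ≤ ((i : ℝ) + 1) * N (i + 1) := by
      have := margulis G i
      simp only [hN]
      exact_mod_cast this
    nlinarith [h]
  have hS_nonpos : q * (1 - q) * deriv (rel G) q ≤ 0 := by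
    rw [hkey]
    exact Finset.sum_nonpos (fun i hi =>
      mul_nonpos_of_nonpos_of_nonneg (hbr_le i hi) (hw0 i))
  -- upper bound for the negated sum
  have hone : (1 : ℝ) - rel G q
      = ∑ i ∈ Finset.range (m + 1), ((m.choose i : ℝ) - N i) * ((1 - q) ^ i * q ^ (m - i)) := by
    have hbin : (∑ i ∈ Finset.range (m + 1),
        (1 - q) ^ i * q ^ (m - i) * (m.choose i : ℝ)) = 1 := by
      rw [← add_pow (1 - q) q m]
      norm_num
    calc (1 : ℝ) - rel G q
        = (∑ i ∈ Finset.range (m + 1), (1 - q) ^ i * q ^ (m - i) * (m.choose i : ℝ))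
          - ∑ i ∈ Finset.range (m + 1),
            (relCoeff G i : ℝ) * (1 - q) ^ i * q ^ (m - i) := by rw [hbin, rel]
      _ = _ := by
          rw [← Finset.sum_sub_distrib]
          exact Finset.sum_congr rfl (fun i _ => by simp only [hN]; ring)
  have hCN : ∀ i, 0 ≤ (m.choose i : ℝ) - N i := by
    intro i
    simp only [hN, sub_nonneg]
    exact_mod_cast relCoeff_le G i
  have hneg : -(q * (1 - q) * deriv (rel G) q) ≤ (m : ℝ) * (1 - rel G q) := by
    rw [hkey, ← Finset.sum_neg_distrib]
    have step1 : ∀ i ∈ Finset.range m,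
        -((N i * ((m - i : ℕ) : ℝ) - N (i + 1) * ((i : ℝ) + 1)) * w i)
        ≤ (m : ℝ) * ((m.choose i : ℝ) - N i) * w i := by
      intro i hi
      rw [Finset.mem_range] at hi
      refine mul_le_mul_of_nonneg_right ?_ (hw0 i) |>.trans' (by rw [neg_mul])
      -- N(i+1)*(i+1) - N i*(m-i) ≤ m*(C(m,i) - N i)
      have hc : (i + 1) * m.choose (i + 1) = (m - i) * m.choose i := by
        rw [mul_comm (i+1), mul_comm (m - i)]
        exact Nat.choose_succ_right_eq m i
      have h1 : (i + 1) * relCoeff G (i + 1) ≤ (m - i) * m.choose i := by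
        rw [← hc]
        exact Nat.mul_le_mul_left _ (relCoeff_le G (i + 1))
      have h1' : N (i + 1) * ((i : ℝ) + 1) ≤ ((m - i : ℕ) : ℝ) * (m.choose i : ℝ) := by
        have h := (Nat.cast_le (α := ℝ)).mpr h1
        push_cast [Nat.cast_sub (le_of_lt hi)] at h ⊢
        simp only [hN]
        push_cast
        nlinarith [h]
      have h2 : ((m - i : ℕ) : ℝ) ≤ (m : ℝ) := by
        exact_mod_cast Nat.sub_le m i
      nlinarith [hCN i, h1', h2, mul_le_mul_of_nonneg_left h2 (hCN i)]
    refine (Finset.sum_le_sum step1).trans ?_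
    rw [hone, Finset.mul_sum]
    have step2 : ∀ i ∈ Finset.range m,
        (m : ℝ) * ((m.choose i : ℝ) - N i) * w i
        ≤ (m : ℝ) * (((m.choose i : ℝ) - N i) * ((1 - q) ^ i * q ^ (m - i))) := by
      intro i hi
      rw [mul_assoc]
      refine mul_le_mul_of_nonneg_left ?_ (by positivity)
      refine mul_le_mul_of_nonneg_left ?_ (hCN i)
      refine mul_le_mul_of_nonneg_right ?_ (pow_nonneg hq0 _)
      exact pow_le_pow_of_le_one hp0 hp1 (Nat.le_succ i)
    refine (Finset.sum_le_sum step2).trans ?_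
    refine Finset.sum_le_sum_of_subset_of_nonneg
      (Finset.range_subset_range.mpr (Nat.le_succ m)) (fun i _ _ => ?_)
    have : (0:ℝ) ≤ ((m.choose i : ℝ) - N i) * ((1 - q) ^ i * q ^ (m - i)) :=
      mul_nonneg (hCN i) (by positivity)
    positivity
  -- conclude
  have habs : q * (1 - q) * |deriv (rel G) q| = |q * (1 - q) * deriv (rel G) q| := by
    rw [abs_mul, abs_of_nonneg (by positivity : (0:ℝ) ≤ q * (1 - q))]
  rw [habs]
  rw [abs_le]
  constructor
  · linarith [hneg]
  · linarith [hS_nonpos, hneg, hS_nonpos.trans (by linarith [hneg] : (0:ℝ) ≤ (m:ℝ) * (1 - rel G q))]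
end

section
/- Let G be a finite simple graph with m edges and reliability polynomial R(G). Then for every q ∈ [0,1], q(1−q)|R(G)''(q)| ≤ m|R(G)'(q)|. -/
section Aux

open Finset

/-- Bernstein-type basis term. -/
noncomputable def bp (m j : ℕ) (q : ℝ) : ℝ := (1 - q) ^ j * q ^ (m - j)

lemma hasDerivAt_bp (m j : ℕ) (q : ℝ) :
    HasDerivAt (bp m j)
      (-((j : ℝ) * (1 - q) ^ (j - 1) * q ^ (m - j))
        + ((m - j : ℕ) : ℝ) * (1 - q) ^ j * q ^ (m - j - 1)) q := by
  have h1 : HasDerivAt (fun q : ℝ => (1 - q) ^ j)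
      ((j : ℝ) * (1 - q) ^ (j - 1) * (-1)) q :=
    ((hasDerivAt_id q).const_sub 1).pow j
  have h2 : HasDerivAt (fun q : ℝ => q ^ (m - j))
      (((m - j : ℕ) : ℝ) * q ^ (m - j - 1)) q := hasDerivAt_pow (m - j) q
  have : HasDerivAt (fun y : ℝ => (1 - y) ^ j * y ^ (m - j)) _ q := h1.fun_mul h2
  convert this using 1
  · funext y; rw [bp]
  · ring

noncomputable def acoef (m : ℕ) (N : ℕ → ℝ) (j : ℕ) : ℝ :=
  ((j : ℝ) + 1) * N (j + 1) - ((m - j : ℕ) : ℝ) * N j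

lemma hasDerivAt_relSum (m : ℕ) (N : ℕ → ℝ) (q : ℝ) :
    HasDerivAt (fun q => ∑ i ∈ range (m + 1), N i * bp m i q)
      (-(∑ j ∈ range m, acoef m N j * bp (m - 1) j q)) q := by
  have hd : HasDerivAt (fun q => ∑ i ∈ range (m + 1), N i * bp m i q)
      (∑ i ∈ range (m + 1), N i *
        (-((i : ℝ) * (1 - q) ^ (i - 1) * q ^ (m - i))
          + ((m - i : ℕ) : ℝ) * (1 - q) ^ i * q ^ (m - i - 1))) q :=
    HasDerivAt.fun_sum fun i _ => (hasDerivAt_bp m i q).const_mul (N i)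
  convert hd using 1
  have split1 : -(∑ j ∈ range m, acoef m N j * bp (m - 1) j q)
      = (∑ j ∈ range m, ((m - j : ℕ) : ℝ) * N j * bp (m - 1) j q)
        - ∑ j ∈ range m, ((j : ℝ) + 1) * N (j + 1) * bp (m - 1) j q := by
    rw [← Finset.sum_sub_distrib, ← Finset.sum_neg_distrib]
    exact Finset.sum_congr rfl fun j _ => by simp [acoef]; ring
  have split2 : (∑ i ∈ range (m + 1), N i *
        (-((i : ℝ) * (1 - q) ^ (i - 1) * q ^ (m - i))
          + ((m - i : ℕ) : ℝ) * (1 - q) ^ i * q ^ (m - i - 1)))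
      = (∑ i ∈ range (m + 1), ((m - i : ℕ) : ℝ) * N i * ((1 - q) ^ i * q ^ (m - i - 1)))
        - ∑ i ∈ range (m + 1), (i : ℝ) * N i * ((1 - q) ^ (i - 1) * q ^ (m - i)) := by
    rw [← Finset.sum_sub_distrib]
    exact Finset.sum_congr rfl fun i _ => by ring
  have e1 : ∑ i ∈ range (m + 1), (i : ℝ) * N i * ((1 - q) ^ (i - 1) * q ^ (m - i))
      = ∑ j ∈ range m, ((j : ℝ) + 1) * N (j + 1) * bp (m - 1) j q := by
    rw [Finset.sum_range_succ']
    simp only [Nat.cast_zero, zero_mul, add_zero]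
    refine Finset.sum_congr rfl fun j hj => ?_
    have h1 : j + 1 - 1 = j := rfl
    have h2 : m - (j + 1) = m - 1 - j := by omega
    rw [h1, h2]
    push_cast
    rfl
  have e2 : ∑ i ∈ range (m + 1), ((m - i : ℕ) : ℝ) * N i * ((1 - q) ^ i * q ^ (m - i - 1))
      = ∑ j ∈ range m, ((m - j : ℕ) : ℝ) * N j * bp (m - 1) j q := by
    rw [Finset.sum_range_succ]
    simp only [Nat.sub_self, Nat.cast_zero, zero_mul, add_zero]
    refine Finset.sum_congr rfl fun j hj => ?_
    have h2 : m - j - 1 = m - 1 - j := by omega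
    rw [h2]
    rfl
  rw [split1, split2, e1, e2]

lemma term_bound {q : ℝ} (hq : q ∈ Set.Icc (0:ℝ) 1) (m j k : ℕ)
    (hj : (j : ℝ) ≤ m) (hk : (k : ℝ) ≤ m) :
    |q * (1 - q) * (-((j : ℝ) * (1 - q) ^ (j - 1) * q ^ k)
        + (k : ℝ) * (1 - q) ^ j * q ^ (k - 1))|
      ≤ (m : ℝ) * ((1 - q) ^ j * q ^ k) := by
  obtain ⟨hq0, hq1⟩ := hq
  have hp0 : 0 ≤ 1 - q := by linarith
  have hid : q * (1 - q) * (-((j : ℝ) * (1 - q) ^ (j - 1) * q ^ k)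
        + (k : ℝ) * (1 - q) ^ j * q ^ (k - 1))
      = ((k : ℝ) * (1 - q) - (j : ℝ) * q) * ((1 - q) ^ j * q ^ k) := by
    cases j with
    | zero =>
      cases k with
      | zero => simp
      | succ k => simp [pow_succ]; ring
    | succ j =>
      cases k with
      | zero => simp [pow_succ]; ring
      | succ k => simp [pow_succ]; ring
  rw [hid, abs_mul]
  have hnn : 0 ≤ (1 - q) ^ j * q ^ k := mul_nonneg (pow_nonneg hp0 j) (pow_nonneg hq0 k)
  rw [abs_of_nonneg hnn]
  apply mul_le_mul_of_nonneg_right _ hnn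
  rw [abs_le]
  constructor
  · nlinarith [Nat.cast_nonneg (α := ℝ) k, Nat.cast_nonneg (α := ℝ) j]
  · nlinarith [Nat.cast_nonneg (α := ℝ) k, Nat.cast_nonneg (α := ℝ) j]

lemma analytic_bound (m : ℕ) (N : ℕ → ℝ) (hN : ∀ j, j < m → 0 ≤ acoef m N j) :
    ∀ q ∈ Set.Icc (0:ℝ) 1,
      q * (1 - q) * |deriv (deriv (fun q => ∑ i ∈ range (m + 1), N i * bp m i q)) q|
        ≤ (m : ℝ) * |deriv (fun q => ∑ i ∈ range (m + 1), N i * bp m i q) q| := by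
  intro q hq
  obtain ⟨hq0, hq1⟩ := hq
  have hp0 : 0 ≤ 1 - q := by linarith
  set S : ℝ → ℝ := fun q => ∑ j ∈ range m, acoef m N j * bp (m - 1) j q with hS
  have hder : deriv (fun q => ∑ i ∈ range (m + 1), N i * bp m i q) = fun q => -(S q) :=
    funext fun q => (hasDerivAt_relSum m N q).deriv
  have hS' : HasDerivAt S (∑ j ∈ range m, acoef m N j *
      (-((j : ℝ) * (1 - q) ^ (j - 1) * q ^ (m - 1 - j))
        + ((m - 1 - j : ℕ) : ℝ) * (1 - q) ^ j * q ^ (m - 1 - j - 1))) q :=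
    HasDerivAt.fun_sum fun j _ => (hasDerivAt_bp (m - 1) j q).const_mul (acoef m N j)
  have hS2 : HasDerivAt (fun q => -(S q)) (-(∑ j ∈ range m, acoef m N j *
      (-((j : ℝ) * (1 - q) ^ (j - 1) * q ^ (m - 1 - j))
        + ((m - 1 - j : ℕ) : ℝ) * (1 - q) ^ j * q ^ (m - 1 - j - 1)))) q := hS'.neg
  rw [hder]
  rw [hS2.deriv]
  have hSnn : ∀ q' : ℝ, q' ∈ Set.Icc (0:ℝ) 1 → 0 ≤ S q' := by
    intro q' hq'
    apply Finset.sum_nonneg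
    intro j hj
    exact mul_nonneg (hN j (Finset.mem_range.mp hj))
      (mul_nonneg (pow_nonneg (by linarith [hq'.2]) j) (pow_nonneg hq'.1 _))
  have habsS : |(-(S q))| = S q := by
    rw [abs_neg, abs_of_nonneg (hSnn q ⟨hq0, hq1⟩)]
  rw [habsS, abs_neg]
  calc q * (1 - q) * |∑ j ∈ range m, acoef m N j *
      (-((j : ℝ) * (1 - q) ^ (j - 1) * q ^ (m - 1 - j))
        + ((m - 1 - j : ℕ) : ℝ) * (1 - q) ^ j * q ^ (m - 1 - j - 1))|
      = |∑ j ∈ range m, acoef m N j * (q * (1 - q) *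
        (-((j : ℝ) * (1 - q) ^ (j - 1) * q ^ (m - 1 - j))
          + ((m - 1 - j : ℕ) : ℝ) * (1 - q) ^ j * q ^ (m - 1 - j - 1)))| := by
        have h1 : (∑ j ∈ range m, acoef m N j * (q * (1 - q) *
            (-((j : ℝ) * (1 - q) ^ (j - 1) * q ^ (m - 1 - j))
              + ((m - 1 - j : ℕ) : ℝ) * (1 - q) ^ j * q ^ (m - 1 - j - 1))))
            = q * (1 - q) * ∑ j ∈ range m, acoef m N j *
            (-((j : ℝ) * (1 - q) ^ (j - 1) * q ^ (m - 1 - j))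
              + ((m - 1 - j : ℕ) : ℝ) * (1 - q) ^ j * q ^ (m - 1 - j - 1)) := by
          rw [Finset.mul_sum]
          exact Finset.sum_congr rfl fun j _ => by ring
        rw [h1, abs_mul, abs_of_nonneg (mul_nonneg hq0 hp0)]
    _ ≤ ∑ j ∈ range m, |acoef m N j * (q * (1 - q) *
        (-((j : ℝ) * (1 - q) ^ (j - 1) * q ^ (m - 1 - j))
          + ((m - 1 - j : ℕ) : ℝ) * (1 - q) ^ j * q ^ (m - 1 - j - 1)))| :=
        Finset.abs_sum_le_sum_abs _ _
    _ ≤ ∑ j ∈ range m, acoef m N j * ((m : ℝ) * bp (m - 1) j q) := by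
        refine Finset.sum_le_sum fun j hj => ?_
        have hjm := Finset.mem_range.mp hj
        rw [abs_mul, abs_of_nonneg (hN j hjm)]
        apply mul_le_mul_of_nonneg_left _ (hN j hjm)
        exact term_bound ⟨hq0, hq1⟩ m j (m - 1 - j)
          (by exact_mod_cast hjm.le) (by exact_mod_cast Nat.sub_le _ _ |>.trans (Nat.sub_le _ _))
    _ = (m : ℝ) * S q := by
        rw [hS, Finset.mul_sum]
        exact Finset.sum_congr rfl fun j _ => by ring

lemma relCoeff_count {V : Type*} [Fintype V] (G : SimpleGraph V) (j : ℕ) :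
    ({S : Finset (Sym2 V) | ↑S ⊆ G.edgeSet ∧ S.card = j ∧
      (SimpleGraph.fromEdgeSet (↑S : Set (Sym2 V))).Connected}.ncard) *
      (G.edgeSet.ncard - j)
    ≤ ({S : Finset (Sym2 V) | ↑S ⊆ G.edgeSet ∧ S.card = j + 1 ∧
      (SimpleGraph.fromEdgeSet (↑S : Set (Sym2 V))).Connected}.ncard) * (j + 1) := by
  classical
  have hfin : G.edgeSet.Finite := Set.toFinite _
  set E := hfin.toFinset with hE
  have hmE : G.edgeSet.ncard = E.card := Set.ncard_eq_toFinset_card _ hfin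
  set P : ℕ → Finset (Sym2 V) → Prop := fun i S => ↑S ⊆ G.edgeSet ∧ S.card = i ∧
      (SimpleGraph.fromEdgeSet (↑S : Set (Sym2 V))).Connected with hP
  have hfin2 : ∀ i, {S : Finset (Sym2 V) | P i S}.Finite := fun i => Set.toFinite _
  set s : ℕ → Finset (Finset (Sym2 V)) := fun i => (hfin2 i).toFinset with hs
  have hcard : ∀ i, {S : Finset (Sym2 V) | P i S}.ncard = (s i).card := fun i =>
    Set.ncard_eq_toFinset_card _ (hfin2 i)
  rw [hcard, hcard, hmE]
  -- the two pair sets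
  set A : Finset (Finset (Sym2 V) × Sym2 V) :=
    (s j).biUnion (fun S => (E \ S).image (fun e => (S, e))) with hA
  set B : Finset (Finset (Sym2 V) × Sym2 V) :=
    (s (j + 1)).biUnion (fun T => T.image (fun e => (T, e))) with hB
  have hmemA : ∀ p : Finset (Sym2 V) × Sym2 V, p ∈ A ↔ p.1 ∈ s j ∧ p.2 ∈ E \ p.1 := by
    intro p
    simp only [hA, Finset.mem_biUnion, Finset.mem_image]
    constructor
    · rintro ⟨S, hS, e, he, rfl⟩; exact ⟨hS, he⟩
    · rintro ⟨h1, h2⟩; exact ⟨p.1, h1, p.2, h2, rfl⟩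
  have hmemB : ∀ p : Finset (Sym2 V) × Sym2 V, p ∈ B ↔ p.1 ∈ s (j + 1) ∧ p.2 ∈ p.1 := by
    intro p
    simp only [hB, Finset.mem_biUnion, Finset.mem_image]
    constructor
    · rintro ⟨S, hS, e, he, rfl⟩; exact ⟨hS, he⟩
    · rintro ⟨h1, h2⟩; exact ⟨p.1, h1, p.2, h2, rfl⟩
  have hcardA : A.card = (s j).card * (E.card - j) := by
    rw [hA, Finset.card_biUnion]
    · rw [Finset.sum_congr rfl (fun S hS => ?_), Finset.sum_const, smul_eq_mul]
      rw [Finset.card_image_of_injective _ (fun a b hab => (Prod.mk.injEq _ _ _ _).mp hab |>.2)]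
      have hSP : P j S := by
        have := (Set.Finite.mem_toFinset (hfin2 j)).mp hS
        exact this
      have hsub : S ⊆ E := fun e he => (Set.Finite.mem_toFinset hfin).mpr (hSP.1 he)
      rw [Finset.card_sdiff_of_subset hsub, hSP.2.1]
    · intro x hx y hy hxy
      simp only [Finset.disjoint_left, Finset.mem_image]
      rintro p ⟨e, he, rfl⟩ ⟨e', he', hpe⟩
      exact hxy ((Prod.mk.injEq _ _ _ _).mp hpe |>.1).symm
  have hcardB : B.card = (s (j + 1)).card * (j + 1) := by
    rw [hB, Finset.card_biUnion]
    · rw [Finset.sum_congr rfl (fun T hT => ?_), Finset.sum_const, smul_eq_mul]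
      rw [Finset.card_image_of_injective _ (fun a b hab => (Prod.mk.injEq _ _ _ _).mp hab |>.2)]
      have hTP : P (j + 1) T := (Set.Finite.mem_toFinset (hfin2 (j + 1))).mp hT
      exact hTP.2.1
    · intro x hx y hy hxy
      simp only [Finset.disjoint_left, Finset.mem_image]
      rintro p ⟨e, he, rfl⟩ ⟨e', he', hpe⟩
      exact hxy ((Prod.mk.injEq _ _ _ _).mp hpe |>.1).symm
  rw [← hcardA, ← hcardB]
  apply Finset.card_le_card_of_injOn (fun p => (insert p.2 p.1, p.2))
  · intro p hp
    obtain ⟨hp1, hp2⟩ := (hmemA p).mp hp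
    obtain ⟨hpE, hpS⟩ := Finset.mem_sdiff.mp hp2
    have hPj : P j p.1 := (Set.Finite.mem_toFinset (hfin2 j)).mp hp1
    have hedge : p.2 ∈ G.edgeSet := (Set.Finite.mem_toFinset hfin).mp hpE
    refine (hmemB _).mpr ⟨?_, Finset.mem_insert_self _ _⟩
    refine (Set.Finite.mem_toFinset (hfin2 (j + 1))).mpr ⟨?_, ?_, ?_⟩
    · rw [Finset.coe_insert]
      exact Set.insert_subset hedge hPj.1
    · rw [Finset.card_insert_of_notMem hpS, hPj.2.1]
    · refine hPj.2.2.mono (SimpleGraph.fromEdgeSet_mono ?_)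
      rw [Finset.coe_insert]
      exact Set.subset_insert _ _
  · intro p hp p' hp' heq
    obtain ⟨heq1, heq2⟩ := Prod.mk.injEq _ _ _ _ |>.mp heq
    obtain ⟨_, hp2⟩ := (hmemA p).mp hp
    obtain ⟨_, hp2'⟩ := (hmemA p').mp hp'
    have hnS : p.2 ∉ p.1 := (Finset.mem_sdiff.mp hp2).2
    have hnS' : p'.2 ∉ p'.1 := (Finset.mem_sdiff.mp hp2').2
    rw [← heq2] at heq1 hnS'
    have : p.1 = p'.1 := by
      have h1 : p.1 = (insert p.2 p.1).erase p.2 := (Finset.erase_insert hnS).symm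
      have h2 : p'.1 = (insert p.2 p'.1).erase p.2 := (Finset.erase_insert hnS').symm
      rw [h1, h2, heq1]
    exact Prod.ext this heq2

end Aux


/-- For a finite simple graph `G` with `m` edges, for every `q ∈ [0,1]`,
`q(1-q)|R(G)''(q)| ≤ m|R(G)'(q)|`. -/

theorem rel_second_deriv_bound {V : Type*} [Fintype V] (G : SimpleGraph V) :
    ∀ q ∈ Set.Icc (0 : ℝ) 1,
      q * (1 - q) * |deriv (deriv (rel G)) q| ≤ (numEdges G : ℝ) * |deriv (rel G) q| := by
  classical
  have hrel : rel G = fun q => ∑ i ∈ Finset.range (numEdges G + 1),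
      (relCoeff G i : ℝ) * bp (numEdges G) i q := by
    funext q
    exact Finset.sum_congr rfl fun i _ => by rw [bp]; ring
  rw [hrel]
  apply analytic_bound
  intro j hj
  have hc : relCoeff G j * (numEdges G - j) ≤ relCoeff G (j + 1) * (j + 1) :=
    relCoeff_count G j
  have hc' : ((relCoeff G j : ℝ)) * ((numEdges G - j : ℕ) : ℝ)
      ≤ ((relCoeff G (j + 1) : ℝ)) * ((j : ℝ) + 1) := by exact_mod_cast hc
  rw [acoef]
  linarith
end

section
/- Let r_n(q) = R(K_n)(q) denote the reliability polynomial of the complete graph K_n on n vertices (so r_1 ≡ 1). Then for every n ≥ 1 and every real q, r_n(q) = 1 − ∑_{k=1}^{n−1} C(n−1, k−1) q^{k(n−k)} r_k(q), where C(n−1,k−1) is a binomial coefficient. -/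
set_option linter.unusedSectionVars false
set_option maxHeartbeats 1000000

section Aux

open Finset SimpleGraph

variable {V : Type*} [Fintype V] [DecidableEq V]

lemma relCoeff_eq_card_s9 {G : SimpleGraph V} {i : ℕ} {F : Finset (Finset (Sym2 V))}
    (h : ∀ S, S ∈ F ↔ (↑S ⊆ G.edgeSet ∧ S.card = i ∧
      (SimpleGraph.fromEdgeSet (↑S : Set (Sym2 V))).Connected)) : relCoeff G i = F.card := by
  rw [relCoeff, show {S : Finset (Sym2 V) | ↑S ⊆ G.edgeSet ∧ S.card = i ∧
      (SimpleGraph.fromEdgeSet (↑S : Set (Sym2 V))).Connected} = ↑F by ext S; simp [h S],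
    Set.ncard_coe_finset]

lemma numEdges_eq_s9 {G : SimpleGraph V} {F : Finset (Sym2 V)} (h : ↑F = G.edgeSet) :
    numEdges G = F.card := by rw [numEdges, ← h, Set.ncard_coe_finset]

lemma sum_weights {ι : Type*} [DecidableEq ι] (F : Finset ι) (q : ℝ) :
    ∑ S ∈ F.powerset, (1 - q) ^ S.card * q ^ (F.card - S.card) = 1 := by
  have h := Finset.prod_add (fun _ : ι => (1 - q)) (fun _ => q) F
  simp only [sub_add_cancel, prod_const_one, prod_const] at h
  conv_rhs => rw [h]
  apply Finset.sum_congr rfl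
  intro t ht
  rw [Finset.card_sdiff_of_subset (Finset.mem_powerset.mp ht)]

/-- `rel` as a sum over connected edge subsets. -/
lemma rel_eq_sum (G : SimpleGraph V) (q : ℝ) {F : Finset (Sym2 V)} (hF : ↑F = G.edgeSet)
    {Fc : Finset (Finset (Sym2 V))}
    (hFc : ∀ S, S ∈ Fc ↔ S ⊆ F ∧ (SimpleGraph.fromEdgeSet (↑S : Set (Sym2 V))).Connected) :
    rel G q = ∑ S ∈ Fc, (1 - q) ^ S.card * q ^ (F.card - S.card) := by
  classical
  have hm : numEdges G = F.card := numEdges_eq_s9 hF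
  rw [rel, ← Finset.sum_fiberwise_of_maps_to (g := Finset.card)
      (t := Finset.range (numEdges G + 1))
      (fun S hS => Finset.mem_range.mpr
        (Nat.lt_succ_of_le (hm ▸ Finset.card_le_card ((hFc S).mp hS).1)))]
  apply Finset.sum_congr rfl
  intro i _
  rw [Finset.sum_congr rfl (fun S hS => by
      rw [(Finset.mem_filter.mp hS).2]), Finset.sum_const,
    relCoeff_eq_card_s9 (F := Fc.filter (fun S => S.card = i)) (fun S => by
      rw [Finset.mem_filter, hFc S]
      rw [← hF, ← Finset.coe_subset]
      tauto)]
  rw [nsmul_eq_mul, mul_assoc, hm]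

/-- The set of potential edges lying within a vertex subset `A`. -/
def within (A : Finset V) : Finset (Sym2 V) :=
  A.sym2.filter (fun e => ¬ e.IsDiag)

lemma mem_within {A : Finset V} {a b : V} :
    s(a, b) ∈ within A ↔ a ∈ A ∧ b ∈ A ∧ a ≠ b := by
  simp [within, Finset.mk_mem_sym2_iff, Sym2.mk_isDiag_iff, and_assoc]

lemma walk_stay {A : Finset V} {S : Finset (Sym2 V)}
    (hS : S ⊆ within A ∪ within Aᶜ) :
    ∀ {x y : V}, (SimpleGraph.fromEdgeSet (↑S : Set (Sym2 V))).Walk x y → x ∈ A →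
      y ∈ A ∧ (SimpleGraph.fromEdgeSet (↑(S ∩ within A) : Set (Sym2 V))).Reachable x y := by
  intro x y p
  induction p with
  | nil => exact fun hx => ⟨hx, SimpleGraph.Reachable.refl _⟩
  | @cons u v w h p ih =>
    intro hx
    rw [SimpleGraph.fromEdgeSet_adj] at h
    obtain ⟨he, hne⟩ := h
    have he' : s(u, v) ∈ S := he
    have hin : s(u, v) ∈ within A := by
      rcases Finset.mem_union.mp (hS he') with h1 | h1
      · exact h1
      · exact absurd (Finset.mem_compl.mp (mem_within.mp h1).1) (by simp [hx])
    have hv : v ∈ A := (mem_within.mp hin).2.1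
    obtain ⟨hw, hr⟩ := ih hv
    refine ⟨hw, SimpleGraph.Reachable.trans ?_ hr⟩
    exact SimpleGraph.Adj.reachable
      ((SimpleGraph.fromEdgeSet_adj _).mpr ⟨Finset.mem_inter.mpr ⟨he', hin⟩, hne⟩)

lemma fromEdgeSet_map {α β : Type*} (f : α ↪ β) (s : Set (Sym2 α)) :
    SimpleGraph.fromEdgeSet (Sym2.map ⇑f '' s) = (SimpleGraph.fromEdgeSet s).map f := by
  ext x y
  simp only [SimpleGraph.fromEdgeSet_adj, SimpleGraph.map_adj, Set.mem_image]
  constructor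
  · rintro ⟨⟨e, he, hmap⟩, hxy⟩
    induction e with
    | _ a b =>
      rw [Sym2.map_pair_eq] at hmap
      rcases Sym2.eq_iff.mp hmap with ⟨h1, h2⟩ | ⟨h1, h2⟩
      · exact ⟨a, b, ⟨he, fun hab => hxy (by rw [← h1, ← h2]; exact congrArg f hab)⟩, h1, h2⟩
      · exact ⟨b, a, ⟨by rwa [Sym2.eq_swap] at he,
          fun hab => hxy (by rw [← h1, ← h2]; exact congrArg f hab)⟩, h2, h1⟩
  · rintro ⟨a, b, ⟨hab, hne⟩, rfl, rfl⟩
    exact ⟨⟨s(a, b), hab, Sym2.map_pair_eq _ _ _⟩, fun h => hne (f.injective h)⟩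

lemma reachable_map_iff {α β : Type*} (f : α ↪ β) (G : SimpleGraph α) (a b : α) :
    (G.map f).Reachable (f a) (f b) ↔ G.Reachable a b := by
  constructor
  · rintro ⟨p⟩
    suffices H : ∀ {x y : β} (_ : (G.map f).Walk x y) (a b : α), f a = x → f b = y →
        G.Reachable a b from H p a b rfl rfl
    intro x y p
    induction p with
    | nil =>
      intro a b ha hb
      have : a = b := f.injective (ha.trans hb.symm)
      subst this
      exact SimpleGraph.Reachable.refl _
    | @cons u v w h p ih =>
      intro a b ha hb
      obtain ⟨a', b', hadj, ha', hb'⟩ := (SimpleGraph.map_adj f G u v).mp h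
      have haa : a = a' := f.injective (ha.trans ha'.symm)
      exact ((haa ▸ hadj).reachable).trans (ih b' b hb' hb)
  · intro h
    exact h.map ⟨⇑f, fun hadj => (SimpleGraph.map_adj f G _ _).mpr ⟨_, _, hadj, rfl, rfl⟩⟩

lemma choose_two_add (a b : ℕ) : (a + b).choose 2 = a.choose 2 + b.choose 2 + a * b := by
  induction a with
  | zero => simp
  | succ a ih =>
    have key : ∀ m : ℕ, (m + 1).choose 2 = m.choose 2 + m := by
      intro m
      have h := Nat.choose_succ_succ m 1
      norm_num [Nat.choose_one_right] at h
      omega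
    have h1 := key (a + b)
    have h2 := key a
    have : a + 1 + b = a + b + 1 := by omega
    rw [this, h1, h2, ih]
    ring

lemma card_within (A : Finset V) : (within A).card = A.card.choose 2 := by
  let g : Fin A.card ↪ V := ⟨fun j => ↑(A.equivFin.symm j),
    fun j1 j2 h => A.equivFin.symm.injective (Subtype.coe_injective h)⟩
  have hrange : Set.range ⇑g = ↑A := by
    ext x
    constructor
    · rintro ⟨j, rfl⟩; exact (A.equivFin.symm j).2
    · intro hx; exact ⟨A.equivFin ⟨x, hx⟩, by show ((A.equivFin.symm (A.equivFin ⟨x, hx⟩) : V)) = x; simp⟩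
  let emb : Sym2 (Fin A.card) ↪ Sym2 V := ⟨Sym2.map ⇑g, Sym2.map.injective g.injective⟩
  have hwithin : ((⊤ : SimpleGraph (Fin A.card)).edgeFinset).map emb = within A := by
    ext e
    constructor
    · intro he
      obtain ⟨e', he', rfl⟩ := Finset.mem_map.mp he
      induction e' with
      | _ i j =>
        have hij : i ≠ j := by simpa using he'
        show Sym2.map ⇑g s(i, j) ∈ within A
        rw [Sym2.map_pair_eq, mem_within]
        refine ⟨?_, ?_, fun h => hij (g.injective h)⟩
        · rw [← Finset.mem_coe, ← hrange]; exact ⟨i, rfl⟩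
        · rw [← Finset.mem_coe, ← hrange]; exact ⟨j, rfl⟩
    · intro he
      induction e with
      | _ x y =>
        obtain ⟨hx, hy, hxy⟩ := mem_within.mp he
        obtain ⟨i, rfl⟩ : x ∈ Set.range ⇑g := hrange ▸ hx
        obtain ⟨j, rfl⟩ : y ∈ Set.range ⇑g := hrange ▸ hy
        refine Finset.mem_map.mpr ⟨s(i, j), ?_, Sym2.map_pair_eq _ _ _⟩
        simpa using fun h => hxy (congrArg g h)
  rw [← hwithin, Finset.card_map, SimpleGraph.card_edgeFinset_top_eq_card_choose_two,
    Fintype.card_fin]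

lemma disj_within {A B : Finset V} (h : Disjoint A B) : Disjoint (within A) (within B) := by
  rw [Finset.disjoint_left]
  intro e heA heB
  induction e with
  | _ x y =>
    exact Finset.disjoint_left.mp h (mem_within.mp heA).1 (mem_within.mp heB).1

lemma comp_eq_iff {A : Finset V} {v0 : V} (hv0 : v0 ∈ A) {S : Finset (Sym2 V)}
    (hS : S ⊆ within (Finset.univ : Finset V)) :
    (∀ x, (SimpleGraph.fromEdgeSet (↑S : Set (Sym2 V))).Reachable v0 x ↔ x ∈ A)
      ↔ (S ⊆ within A ∪ within Aᶜ ∧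
         ∀ a ∈ A, (SimpleGraph.fromEdgeSet (↑(S ∩ within A) : Set (Sym2 V))).Reachable v0 a) := by
  constructor
  · intro hreach
    have hsplit : S ⊆ within A ∪ within Aᶜ := by
      intro e he
      induction e with
      | _ x y =>
        have hne : x ≠ y := (mem_within.mp (hS he)).2.2
        have hadj : (SimpleGraph.fromEdgeSet (↑S : Set (Sym2 V))).Adj x y :=
          (SimpleGraph.fromEdgeSet_adj _).mpr ⟨he, hne⟩
        by_cases hx : x ∈ A
        · have hy : y ∈ A := (hreach y).mp (((hreach x).mpr hx).trans hadj.reachable)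
          exact Finset.mem_union_left _ (mem_within.mpr ⟨hx, hy, hne⟩)
        · have hy : y ∉ A := fun hy =>
            hx ((hreach x).mp (((hreach y).mpr hy).trans hadj.symm.reachable))
          exact Finset.mem_union_right _
            (mem_within.mpr ⟨Finset.mem_compl.mpr hx, Finset.mem_compl.mpr hy, hne⟩)
    refine ⟨hsplit, fun a ha => ?_⟩
    obtain ⟨p⟩ := (hreach a).mpr ha
    exact (walk_stay hsplit p hv0).2
  · rintro ⟨hsplit, hconn⟩
    intro x
    constructor
    · rintro ⟨p⟩
      exact (walk_stay hsplit p hv0).1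
    · intro hx
      exact (hconn x hx).mono (SimpleGraph.fromEdgeSet_mono
        (by exact_mod_cast Finset.coe_subset.mpr Finset.inter_subset_left))

lemma count_subsets (v0 : V) (k : ℕ) (hk : 1 ≤ k) {F : Finset (Finset V)}
    (hF : ∀ A, A ∈ F ↔ v0 ∈ A ∧ A.card = k) :
    F.card = (Fintype.card V - 1).choose (k - 1) := by
  have hc : (Finset.univ.erase v0).card = Fintype.card V - 1 := by
    rw [Finset.card_erase_of_mem (Finset.mem_univ v0), Finset.card_univ]
  rw [← hc, ← Finset.card_powersetCard]
  apply Finset.card_nbij' (i := fun A => A.erase v0) (j := fun B => insert v0 B)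
  · intro A hA
    rw [Finset.mem_coe, hF] at hA
    rw [Finset.mem_coe, Finset.mem_powersetCard]
    exact ⟨Finset.erase_subset_erase _ (Finset.subset_univ A),
      by rw [Finset.card_erase_of_mem hA.1, hA.2]⟩
  · intro B hB
    rw [Finset.mem_coe, Finset.mem_powersetCard] at hB
    have hv0B : v0 ∉ B := fun h => (Finset.mem_erase.mp (hB.1 h)).1 rfl
    rw [Finset.mem_coe, hF]
    exact ⟨Finset.mem_insert_self _ _, by rw [Finset.card_insert_of_notMem hv0B, hB.2]; omega⟩
  · intro A hA
    rw [Finset.mem_coe, hF] at hA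
    exact Finset.insert_erase hA.1
  · intro B hB
    rw [Finset.mem_coe, Finset.mem_powersetCard] at hB
    exact Finset.erase_insert (fun h => (Finset.mem_erase.mp (hB.1 h)).1 rfl)

lemma sum_connOn (A : Finset V) {v0 : V} (hv0 : v0 ∈ A) {Fc : Finset (Finset (Sym2 V))}
    (hFc : ∀ T, T ∈ Fc ↔ T ⊆ within A ∧
      ∀ a ∈ A, (SimpleGraph.fromEdgeSet (↑T : Set (Sym2 V))).Reachable v0 a) (q : ℝ) :
    ∑ T ∈ Fc, (1 - q) ^ T.card * q ^ ((within A).card - T.card) = relK A.card q := by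
  classical
  set k := A.card with hk
  let g : Fin k ↪ V := ⟨fun j => ↑(A.equivFin.symm j),
    fun j1 j2 h => A.equivFin.symm.injective (Subtype.coe_injective h)⟩
  have hrange : Set.range ⇑g = ↑A := by
    ext x
    constructor
    · rintro ⟨j, rfl⟩; exact (A.equivFin.symm j).2
    · intro hx; exact ⟨A.equivFin ⟨x, hx⟩, by show ((A.equivFin.symm (A.equivFin ⟨x, hx⟩) : V)) = x; simp⟩
  let emb : Sym2 (Fin k) ↪ Sym2 V := ⟨Sym2.map ⇑g, Sym2.map.injective g.injective⟩
  have hinjOn : ∀ T : Finset (Sym2 V), Set.InjOn (Sym2.map ⇑g) ((Sym2.map ⇑g) ⁻¹' ↑T) :=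
    fun T => (Sym2.map.injective g.injective).injOn
  have hwithin : ((⊤ : SimpleGraph (Fin k)).edgeFinset).map emb = within A := by
    ext e
    constructor
    · intro he
      obtain ⟨e', he', rfl⟩ := Finset.mem_map.mp he
      induction e' with
      | _ i j =>
        have hij : i ≠ j := by simpa using he'
        show Sym2.map ⇑g s(i, j) ∈ within A
        rw [Sym2.map_pair_eq, mem_within]
        refine ⟨?_, ?_, fun h => hij (g.injective h)⟩
        · rw [← Finset.mem_coe, ← hrange]; exact ⟨i, rfl⟩
        · rw [← Finset.mem_coe, ← hrange]; exact ⟨j, rfl⟩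
    · intro he
      induction e with
      | _ x y =>
        obtain ⟨hx, hy, hxy⟩ := mem_within.mp he
        obtain ⟨i, rfl⟩ : x ∈ Set.range ⇑g := hrange ▸ hx
        obtain ⟨j, rfl⟩ : y ∈ Set.range ⇑g := hrange ▸ hy
        refine Finset.mem_map.mpr ⟨s(i, j), ?_, Sym2.map_pair_eq _ _ _⟩
        simpa using fun h => hxy (congrArg g h)
  let i0 : Fin k := A.equivFin ⟨v0, hv0⟩
  have hg0 : g i0 = v0 := by show ((A.equivFin.symm (A.equivFin ⟨v0, hv0⟩) : V)) = v0; simp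
  have hmap_pre : ∀ T : Finset (Sym2 V), T ⊆ within A →
      (T.preimage (Sym2.map ⇑g) (hinjOn T)).map emb = T := by
    intro T hT
    ext e
    constructor
    · intro he
      obtain ⟨e', he', rfl⟩ := Finset.mem_map.mp he
      exact Finset.mem_preimage.mp he'
    · intro he
      obtain ⟨e0, _, he0⟩ := Finset.mem_map.mp (hwithin ▸ hT he)
      exact Finset.mem_map.mpr
        ⟨e0, Finset.mem_preimage.mpr (by rw [← he0] at he; exact he), he0⟩
  have hconn : ∀ T' : Finset (Sym2 (Fin k)),
      ((SimpleGraph.fromEdgeSet (↑T' : Set (Sym2 (Fin k)))).Connected ↔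
       ∀ a ∈ A, (SimpleGraph.fromEdgeSet (↑(T'.map emb) : Set (Sym2 V))).Reachable v0 a) := by
    intro T'
    have hcoe : (↑(T'.map emb) : Set (Sym2 V)) = Sym2.map ⇑g '' ↑T' := Finset.coe_map emb T'
    rw [hcoe, fromEdgeSet_map g]
    constructor
    · intro hc a ha
      obtain ⟨j, rfl⟩ : a ∈ Set.range ⇑g := hrange ▸ (ha : a ∈ (↑A : Set V))
      rw [← hg0, reachable_map_iff]
      exact hc.preconnected i0 j
    · intro h
      rw [SimpleGraph.connected_iff_exists_forall_reachable]
      refine ⟨i0, fun j => ?_⟩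
      rw [← reachable_map_iff g, hg0]
      exact h (g j) (by rw [← Finset.mem_coe, ← hrange]; exact ⟨j, rfl⟩)
  have hcoeE : (↑((⊤ : SimpleGraph (Fin k)).edgeFinset) : Set (Sym2 (Fin k))) =
      (⊤ : SimpleGraph (Fin k)).edgeSet := SimpleGraph.coe_edgeFinset _
  have hFc' : ∀ T' : Finset (Sym2 (Fin k)),
      T' ∈ ((⊤ : SimpleGraph (Fin k)).edgeFinset).powerset.filter
        (fun T' : Finset (Sym2 (Fin k)) =>
          (SimpleGraph.fromEdgeSet (↑T' : Set (Sym2 (Fin k)))).Connected) ↔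
      T' ⊆ (⊤ : SimpleGraph (Fin k)).edgeFinset ∧
        (SimpleGraph.fromEdgeSet (↑T' : Set (Sym2 (Fin k)))).Connected := by
    intro T'
    rw [Finset.mem_filter, Finset.mem_powerset]
  rw [show relK k q = rel (⊤ : SimpleGraph (Fin k)) q from rfl, rel_eq_sum _ q hcoeE hFc']
  have hcard : ((⊤ : SimpleGraph (Fin k)).edgeFinset).card = (within A).card := by
    rw [← hwithin, Finset.card_map]
  rw [hcard]
  refine (Finset.sum_nbij' (i := fun (T' : Finset (Sym2 (Fin k))) => T'.map emb)
    (j := fun (T : Finset (Sym2 V)) => T.preimage (Sym2.map ⇑g) (hinjOn T))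
    ?_ ?_ ?_ ?_ ?_).symm
  · intro T' hT'
    rw [hFc'] at hT'
    rw [hFc]
    refine ⟨?_, (hconn T').mp hT'.2⟩
    rw [← hwithin]
    exact Finset.map_subset_map.mpr hT'.1
  · intro T hT
    rw [hFc] at hT
    rw [hFc']
    have hmp := hmap_pre T hT.1
    constructor
    · rw [← Finset.map_subset_map (f := emb), hmp, hwithin]; exact hT.1
    · rw [hconn, hmp]; exact hT.2
  · intro T' _
    ext e'
    rw [Finset.mem_preimage]
    constructor
    · intro h
      obtain ⟨e0, he0, heq⟩ := Finset.mem_map.mp h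
      rwa [show e0 = e' from Sym2.map.injective g.injective heq] at he0
    · intro h
      exact Finset.mem_map.mpr ⟨e', h, rfl⟩
  · intro T hT
    rw [hFc] at hT
    exact hmap_pre T hT.1
  · intro T' _
    rw [Finset.card_map]

end Aux

/-- The recurrence for the reliability polynomial of complete graphs:
`r_n(q) = 1 - ∑_{k=1}^{n-1} C(n-1, k-1) q^(k(n-k)) r_k(q)`. -/
theorem relK_recurrence (n : ℕ) (hn : 1 ≤ n) (q : ℝ) :
    relK n q =
      1 - ∑ k ∈ Finset.Icc 1 (n - 1),
        ((n - 1).choose (k - 1) : ℝ) * q ^ (k * (n - k)) * relK k q := by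
  classical
  open Finset SimpleGraph in
  set v0 : Fin n := ⟨0, hn⟩ with hv0def
  set W : Finset (Sym2 (Fin n)) := within (Finset.univ : Finset (Fin n)) with hWdef
  have hsubW : ∀ B : Finset (Fin n), within B ⊆ W := by
    intro B e he
    induction e with
    | _ x y =>
      obtain ⟨_, _, hne⟩ := mem_within.mp he
      exact mem_within.mpr ⟨Finset.mem_univ _, Finset.mem_univ _, hne⟩
  have hfilter_iff : ∀ (S : Finset (Sym2 (Fin n))) (A : Finset (Fin n)),
      (Finset.univ.filter
        (fun x => (SimpleGraph.fromEdgeSet (↑S : Set (Sym2 (Fin n)))).Reachable v0 x) = A)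
      ↔ ∀ x, (SimpleGraph.fromEdgeSet (↑S : Set (Sym2 (Fin n)))).Reachable v0 x ↔ x ∈ A := by
    intro S A
    constructor
    · intro h x
      rw [← h]
      simp
    · intro h
      ext x
      simp [h x]
  have key : (1 : ℝ) = ∑ k ∈ Finset.Icc 1 n,
      ((n - 1).choose (k - 1) : ℝ) * q ^ (k * (n - k)) * relK k q := by
    have h1 : (1 : ℝ) = ∑ S ∈ W.powerset, (1 - q) ^ S.card * q ^ (W.card - S.card) :=
      (sum_weights W q).symm
    have hmaps : ∀ S ∈ W.powerset,
        (Finset.univ.filter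
          (fun x => (SimpleGraph.fromEdgeSet (↑S : Set (Sym2 (Fin n)))).Reachable v0 x))
          ∈ Finset.univ.filter (fun A : Finset (Fin n) => v0 ∈ A) := by
      intro S _
      simp only [Finset.mem_filter, Finset.mem_univ, true_and]
      exact SimpleGraph.Reachable.refl _
    rw [← Finset.sum_fiberwise_of_maps_to hmaps] at h1
    have hper : ∀ A ∈ Finset.univ.filter (fun A : Finset (Fin n) => v0 ∈ A),
        (∑ S ∈ W.powerset.filter (fun (S : Finset (Sym2 (Fin n))) => Finset.univ.filter
            (fun x => (SimpleGraph.fromEdgeSet (↑S : Set (Sym2 (Fin n)))).Reachable v0 x) = A),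
          (1 - q) ^ S.card * q ^ (W.card - S.card))
        = q ^ (A.card * (n - A.card)) * relK A.card q := by
      intro A hA
      have hv0A : v0 ∈ A := by simpa using hA
      have hAcard : A.card ≤ n := by
        have := Finset.card_le_univ A
        rwa [Fintype.card_fin] at this
      have hdisj : Disjoint (within A) (within Aᶜ) := disj_within disjoint_compl_right
      have hWcard : W.card = n.choose 2 := by
        rw [hWdef, card_within, Finset.card_univ, Fintype.card_fin]
      have hAc : (Aᶜ : Finset (Fin n)).card = n - A.card := by
        rw [Finset.card_compl, Fintype.card_fin]
      have hwA : (within A).card = A.card.choose 2 := card_within A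
      have hwAc : (within (Aᶜ : Finset (Fin n))).card = (n - A.card).choose 2 := by
        rw [card_within, hAc]
      have hchoose : n.choose 2 = A.card.choose 2 + (n - A.card).choose 2
          + A.card * (n - A.card) := by
        have h := choose_two_add A.card (n - A.card)
        rwa [Nat.add_sub_cancel' hAcard] at h
      have hbij : (∑ S ∈ W.powerset.filter (fun (S : Finset (Sym2 (Fin n))) =>
            Finset.univ.filter
            (fun x => (SimpleGraph.fromEdgeSet (↑S : Set (Sym2 (Fin n)))).Reachable v0 x) = A),
          (1 - q) ^ S.card * q ^ (W.card - S.card))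
          = ∑ p ∈ ((within A).powerset.filter (fun T : Finset (Sym2 (Fin n)) =>
              ∀ a ∈ A, (SimpleGraph.fromEdgeSet (↑T : Set (Sym2 (Fin n)))).Reachable v0 a))
              ×ˢ (within (Aᶜ : Finset (Fin n))).powerset,
            ((1 - q) ^ p.1.card * q ^ ((within A).card - p.1.card)) *
            (((1 - q) ^ p.2.card * q ^ ((within (Aᶜ : Finset (Fin n))).card - p.2.card)) *
              q ^ (A.card * (n - A.card))) := by
        refine Finset.sum_nbij'
          (i := fun (S : Finset (Sym2 (Fin n))) => (S ∩ within A, S ∩ within Aᶜ))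
          (j := fun p => p.1 ∪ p.2) ?_ ?_ ?_ ?_ ?_
        · intro S hS
          rw [Finset.mem_filter, Finset.mem_powerset] at hS
          obtain ⟨hsplit, hconn⟩ :=
            (comp_eq_iff hv0A hS.1).mp ((hfilter_iff S A).mp hS.2)
          rw [Finset.mem_product]
          exact ⟨Finset.mem_filter.mpr ⟨Finset.mem_powerset.mpr Finset.inter_subset_right, hconn⟩,
            Finset.mem_powerset.mpr Finset.inter_subset_right⟩
        · intro p hp
          rw [Finset.mem_product, Finset.mem_filter, Finset.mem_powerset,
            Finset.mem_powerset] at hp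
          obtain ⟨⟨hT, hconn⟩, hU⟩ := hp
          have hinter : (p.1 ∪ p.2) ∩ within A = p.1 := by
            rw [Finset.union_inter_distrib_right, Finset.inter_eq_left.mpr hT,
              Finset.disjoint_iff_inter_eq_empty.mp (hdisj.symm.mono_left hU), Finset.union_empty]
          rw [Finset.mem_filter, Finset.mem_powerset]
          have hsubWA : p.1 ∪ p.2 ⊆ W :=
            Finset.union_subset (hT.trans (hsubW A)) (hU.trans (hsubW Aᶜ))
          refine ⟨hsubWA, (hfilter_iff _ A).mpr ((comp_eq_iff hv0A hsubWA).mpr ⟨?_, ?_⟩)⟩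
          · exact Finset.union_subset_union hT hU
          · rw [hinter]; exact hconn
        · intro S hS
          rw [Finset.mem_filter, Finset.mem_powerset] at hS
          obtain ⟨hsplit, _⟩ := (comp_eq_iff hv0A hS.1).mp ((hfilter_iff S A).mp hS.2)
          show (S ∩ within A) ∪ (S ∩ within Aᶜ) = S
          rw [← Finset.inter_union_distrib_left]
          exact Finset.inter_eq_left.mpr hsplit
        · intro p hp
          rw [Finset.mem_product, Finset.mem_filter, Finset.mem_powerset,
            Finset.mem_powerset] at hp
          obtain ⟨⟨hT, _⟩, hU⟩ := hp
          have h1' : (p.1 ∪ p.2) ∩ within A = p.1 := by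
            rw [Finset.union_inter_distrib_right, Finset.inter_eq_left.mpr hT,
              Finset.disjoint_iff_inter_eq_empty.mp (hdisj.symm.mono_left hU), Finset.union_empty]
          have h2' : (p.1 ∪ p.2) ∩ within Aᶜ = p.2 := by
            rw [Finset.union_inter_distrib_right, Finset.inter_eq_left.mpr hU,
              Finset.disjoint_iff_inter_eq_empty.mp (hdisj.mono_left hT), Finset.empty_union]
          exact Prod.ext (by simpa using h1') (by simpa using h2')
        · intro S hS
          rw [Finset.mem_filter, Finset.mem_powerset] at hS
          obtain ⟨hsplit, _⟩ := (comp_eq_iff hv0A hS.1).mp ((hfilter_iff S A).mp hS.2)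
          have hSeq : (S ∩ within A) ∪ (S ∩ within Aᶜ) = S := by
            rw [← Finset.inter_union_distrib_left]
            exact Finset.inter_eq_left.mpr hsplit
          have hdisj' : Disjoint (S ∩ within A) (S ∩ within Aᶜ) :=
            hdisj.mono Finset.inter_subset_right Finset.inter_subset_right
          have hcards : S.card = (S ∩ within A).card + (S ∩ within Aᶜ).card := by
            conv_lhs => rw [← hSeq]
            rw [Finset.card_union_of_disjoint hdisj']
          have hTle : (S ∩ within A).card ≤ (within A).card :=
            Finset.card_le_card Finset.inter_subset_right
          have hUle : (S ∩ within Aᶜ).card ≤ (within (Aᶜ : Finset (Fin n))).card :=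
            Finset.card_le_card Finset.inter_subset_right
          have hexp : W.card - S.card = ((within A).card - (S ∩ within A).card) +
              (((within (Aᶜ : Finset (Fin n))).card - (S ∩ within Aᶜ).card) +
                A.card * (n - A.card)) := by omega
          rw [hexp, hcards, pow_add, pow_add, pow_add]
          ring
      rw [hbij, Finset.sum_product]
      have hinner : ∀ T ∈ (within A).powerset.filter (fun T : Finset (Sym2 (Fin n)) =>
          ∀ a ∈ A, (SimpleGraph.fromEdgeSet (↑T : Set (Sym2 (Fin n)))).Reachable v0 a),
          (∑ U ∈ (within (Aᶜ : Finset (Fin n))).powerset,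
            ((1 - q) ^ T.card * q ^ ((within A).card - T.card)) *
            (((1 - q) ^ U.card * q ^ ((within (Aᶜ : Finset (Fin n))).card - U.card)) *
              q ^ (A.card * (n - A.card))))
          = ((1 - q) ^ T.card * q ^ ((within A).card - T.card)) *
              (q ^ (A.card * (n - A.card))) := by
        intro T _
        rw [← Finset.mul_sum, ← Finset.sum_mul, sum_weights, one_mul]
      rw [Finset.sum_congr rfl hinner, ← Finset.sum_mul,
        sum_connOn A hv0A (fun T => by rw [Finset.mem_filter, Finset.mem_powerset]) q]
      ring
    rw [Finset.sum_congr rfl hper] at h1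
    have hmaps2 : ∀ A ∈ Finset.univ.filter (fun A : Finset (Fin n) => v0 ∈ A),
        A.card ∈ Finset.Icc 1 n := by
      intro A hA
      have hv0A : v0 ∈ A := by simpa using hA
      have h1' : 1 ≤ A.card := Finset.card_pos.mpr ⟨v0, hv0A⟩
      have h2' : A.card ≤ n := by
        have := Finset.card_le_univ A
        rwa [Fintype.card_fin] at this
      exact Finset.mem_Icc.mpr ⟨h1', h2'⟩
    rw [← Finset.sum_fiberwise_of_maps_to hmaps2] at h1
    rw [h1]
    apply Finset.sum_congr rfl
    intro k hk
    have hk1 : 1 ≤ k := (Finset.mem_Icc.mp hk).1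
    have hconst : ∀ A ∈ (Finset.univ.filter (fun A : Finset (Fin n) => v0 ∈ A)).filter
        (fun A => A.card = k),
        q ^ (A.card * (n - A.card)) * relK A.card q = q ^ (k * (n - k)) * relK k q := by
      intro A hA
      rw [(Finset.mem_filter.mp hA).2]
    have hcount : ((Finset.univ.filter (fun A : Finset (Fin n) => v0 ∈ A)).filter
        (fun A => A.card = k)).card = (n - 1).choose (k - 1) := by
      rw [count_subsets v0 k hk1 (fun A => by simp [Finset.mem_filter, and_assoc]),
        Fintype.card_fin]
    rw [Finset.sum_congr rfl hconst, Finset.sum_const, hcount, nsmul_eq_mul, mul_assoc]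
  have hnmem : n ∉ Finset.Icc 1 (n - 1) := by
    rw [Finset.mem_Icc]; omega
  have hIcc : Finset.Icc 1 n = insert n (Finset.Icc 1 (n - 1)) := by
    ext x
    simp only [Finset.mem_Icc, Finset.mem_insert]
    omega
  rw [hIcc, Finset.sum_insert hnmem] at key
  have hterm : ((n - 1).choose (n - 1) : ℝ) * q ^ (n * (n - n)) * relK n q = relK n q := by
    rw [Nat.choose_self, Nat.sub_self, Nat.mul_zero, pow_zero]
    simp
  rw [hterm] at key
  linarith [key]
end

section
/- Let m ≥ 1 be an integer, let 0 < a < b < 1 with b − a ≤ 2^{−m}, and let s : ℝ → ℝ be twice differentiable on [0,1] with 0 ≤ s(q) ≤ 1 and s'(q) ≤ 0 for all q ∈ [0,1]. Suppose s(a) ≥ 3/4, s(b) ≤ 1/4, and |s'(b)| ≤ 2^{−m−1}. Then there exists a point q ∈ (a,b) such that s'(q) ≤ −2^{m−2} and s''(q) ≥ 2^{2m−2}. -/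
/-- Let `m ≥ 1`, `0 < a < b < 1` with `b - a ≤ 2^(-m)`, and let `s` be twice
differentiable on `[0,1]`, with values in `[0,1]` and nonincreasing there. If
`s(a) ≥ 3/4`, `s(b) ≤ 1/4` and `|s'(b)| ≤ 2^(-m-1)`, then there is a point
`q ∈ (a,b)` with `s'(q) ≤ -2^(m-2)` and `s''(q) ≥ 2^(2m-2)`. -/
theorem exists_point_large_derivs (m : ℕ) (hm : 1 ≤ m) (a b : ℝ)
    (ha : 0 < a) (hab : a < b) (hb : b < 1)
    (hlen : b - a ≤ (2 : ℝ) ^ (-(m : ℤ)))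
    (s : ℝ → ℝ)
    (hdiff : ∀ q ∈ Set.Icc (0 : ℝ) 1,
      DifferentiableAt ℝ s q ∧ DifferentiableAt ℝ (deriv s) q)
    (hs01 : ∀ q ∈ Set.Icc (0 : ℝ) 1, s q ∈ Set.Icc (0 : ℝ) 1)
    (hs' : ∀ q ∈ Set.Icc (0 : ℝ) 1, deriv s q ≤ 0)
    (hsa : 3 / 4 ≤ s a) (hsb : s b ≤ 1 / 4)
    (hsb' : |deriv s b| ≤ (2 : ℝ) ^ (-(m : ℤ) - 1)) :
    ∃ q ∈ Set.Ioo a b,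
      deriv s q ≤ -(2 : ℝ) ^ ((m : ℤ) - 2) ∧
      (2 : ℝ) ^ (2 * (m : ℤ) - 2) ≤ deriv (deriv s) q := by
  have hsub : Set.Icc a b ⊆ Set.Icc (0 : ℝ) 1 :=
    Set.Icc_subset_Icc ha.le hb.le
  have hcont : ContinuousOn s (Set.Icc a b) := fun x hx =>
    ((hdiff x (hsub hx)).1.continuousAt).continuousWithinAt
  have hcont' : ContinuousOn (deriv s) (Set.Icc a b) := fun x hx =>
    ((hdiff x (hsub hx)).2.continuousAt).continuousWithinAt
  have hdiffOn : DifferentiableOn ℝ s (Set.Ioo a b) := fun x hx =>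
    ((hdiff x (hsub (Set.Ioo_subset_Icc_self hx))).1).differentiableWithinAt
  obtain ⟨c, hc, hcslope⟩ := exists_deriv_eq_slope s hab hcont hdiffOn
  set K : ℝ := -(2 : ℝ) ^ ((m : ℤ) - 2) with hK
  -- basic power facts
  have hpow1 : (2 : ℝ) ^ ((m : ℤ) - 1) * (2 : ℝ) ^ (-(m : ℤ)) = 1 / 2 := by
    rw [← zpow_add₀ (by norm_num : (2:ℝ) ≠ 0), show (m:ℤ)-1 + -(m:ℤ) = -1 by ring]; norm_num
  have hpow2 : (2 : ℝ) ^ ((m : ℤ) - 1) = 2 * (2 : ℝ) ^ ((m : ℤ) - 2) := by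
    rw [show (m : ℤ) - 1 = 1 + ((m:ℤ) - 2) by ring, zpow_add₀ (by norm_num : (2:ℝ) ≠ 0)]
    norm_num
  have hpow3 : (2:ℝ)^(2*(m:ℤ)-2) * (2 : ℝ) ^ (-(m : ℤ)) = (2:ℝ)^((m:ℤ)-2) := by
    rw [← zpow_add₀ (by norm_num : (2:ℝ) ≠ 0), show 2*(m:ℤ)-2 + -(m:ℤ) = (m:ℤ)-2 by ring]
  have hbma : (0:ℝ) < b - a := by linarith
  have hpowpos : ∀ k : ℤ, (0:ℝ) < (2:ℝ)^k := fun k => zpow_pos (by norm_num) k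
  -- s'(c) ≤ -2^(m-1)
  have hc' : deriv s c ≤ -(2:ℝ) ^ ((m : ℤ) - 1) := by
    rw [hcslope, div_le_iff₀ hbma]
    have h1 : s b - s a ≤ -(1/2) := by linarith
    have h2 : -(2:ℝ)^((m:ℤ)-1) * (b - a) ≥ -(2:ℝ)^((m:ℤ)-1) * (2:ℝ)^(-(m:ℤ)) := by
      have := hpowpos ((m:ℤ)-1)
      nlinarith
    nlinarith
  -- s'(b) > K
  have hbK : K < deriv s b := by
    have h1 : -(2:ℝ)^(-(m:ℤ)-1) ≤ deriv s b := by
      have := abs_le.mp hsb'; linarith [this.1]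
    have h2 : (2:ℝ)^(-(m:ℤ)-1) < (2:ℝ)^((m:ℤ)-2) := by
      apply zpow_lt_zpow_right₀ (by norm_num : (1:ℝ) < 2)
      omega
    rw [hK]; linarith
  have hcK : deriv s c < K := by
    have := hpowpos ((m:ℤ)-2)
    rw [hK]; nlinarith [hpow2]
  have hcb : c ≤ b := hc.2.le
  have hcont'' : ContinuousOn (deriv s) (Set.Icc c b) :=
    hcont'.mono (Set.Icc_subset_Icc hc.1.le le_rfl)
  -- the set where deriv s = K on [c,b]
  set E : Set ℝ := Set.Icc c b ∩ (deriv s) ⁻¹' {K} with hE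
  have hEne : E.Nonempty := by
    have := intermediate_value_Icc hcb hcont''
    have hKmem : K ∈ Set.Icc (deriv s c) (deriv s b) := ⟨hcK.le, hbK.le⟩
    obtain ⟨x, hx, hxK⟩ := this hKmem
    exact ⟨x, hx, hxK⟩
  have hEclosed : IsClosed E :=
    hcont''.preimage_isClosed_of_isClosed isClosed_Icc isClosed_singleton
  have hEbdd : BddBelow E := ⟨c, fun x hx => hx.1.1⟩
  set d : ℝ := sInf E with hd
  have hdE : d ∈ E := hEclosed.csInf_mem hEne hEbdd
  have hdval : deriv s d = K := hdE.2
  have hdcb : d ∈ Set.Icc c b := hdE.1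
  have hcd : c < d := by
    rcases lt_or_eq_of_le hdcb.1 with h | h
    · exact h
    · exfalso; rw [← h] at hdval; exact absurd hdval hcK.ne
  -- on [c,d), deriv s < K
  have hlow : ∀ x ∈ Set.Ico c d, deriv s x < K := by
    intro x hx
    by_contra hcon
    push_neg at hcon
    have hxb : x ≤ b := le_trans hx.2.le hdcb.2
    have hIVT := intermediate_value_Icc hx.1 (hcont''.mono (Set.Icc_subset_Icc le_rfl hxb))
    obtain ⟨y, hy, hyK⟩ := hIVT ⟨hcK.le, hcon⟩
    have hyE : y ∈ E := ⟨⟨hy.1, le_trans hy.2 hxb⟩, hyK⟩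
    have : d ≤ y := csInf_le hEbdd hyE
    have : d ≤ x := le_trans this hy.2
    exact absurd hx.2 (not_lt.mpr this)
  -- MVT for deriv s on [c,d]
  have hsubcd : Set.Icc c d ⊆ Set.Icc a b :=
    Set.Icc_subset_Icc hc.1.le hdcb.2
  obtain ⟨q, hq, hqslope⟩ := exists_deriv_eq_slope (deriv s) hcd
    (hcont'.mono hsubcd)
    (fun x hx => ((hdiff x (hsub (hsubcd (Set.Ioo_subset_Icc_self hx)))).2).differentiableWithinAt)
  have hqab : q ∈ Set.Ioo a b :=
    ⟨lt_trans hc.1 hq.1, lt_of_lt_of_le hq.2 hdcb.2⟩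
  refine ⟨q, hqab, ?_, ?_⟩
  · exact (hlow q ⟨hq.1.le, hq.2⟩).le
  · rw [hqslope, hdval, le_div_iff₀ (by linarith [hq.1, hq.2] : (0:ℝ) < d - c)]
    have hdc : d - c ≤ b - a := by
      have := hc.1; have := hdcb.2; linarith
    have hdc2 : d - c ≤ (2:ℝ)^(-(m:ℤ)) := le_trans hdc hlen
    have h1 : K - deriv s c ≥ (2:ℝ)^((m:ℤ)-2) := by
      rw [hK]; nlinarith [hpow2]
    have h2 : (0:ℝ) < (2:ℝ)^(2*(m:ℤ)-2) := hpowpos _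
    have h3 : (0:ℝ) < d - c := by linarith [hq.1, hq.2]
    nlinarith [hpow3, mul_le_mul_of_nonneg_left hdc2 h2.le]
end
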